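/- Let A = (Q_{2^{s_n}})^{i_n}(Q_{2^{s_{n−1}}})^{i_{n−1}}⋯(Q_{2^{s_1}})^{i_1} be an A-polynomial. Suppose that for some k ∈ {0,1,…,n−2} one has i_n = i_{n−1} = … = i_{n−k} = 1 and i_{n−k−1} = 2, and the exponents are consecutive: s_n = s_{n−1}+1 = s_{n−2}+2 = … = s_{n−k−1}+k+1. Then ∫ A dμ = ||Q_{2^{s_n}}||² · ∫ (Q_{2^{s_{n−k−2}}})^{i_{n−k−2}}⋯(Q_{2^{s_1}})^{i_1} dμ (where the remaining product is the constant 1 if n−k−2 = 0). -/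

import Mathlib

open Polynomial MeasureTheory Filter

/-- `r γ s` : the recursively defined scales `r 0 = 1`, `r (s+1) = γ (s+1) * (r s)²`. -/
noncomputable def r (γ : ℕ → ℝ) : ℕ → ℝ
  | 0 => 1
  | s + 1 => γ (s + 1) * (r γ s) ^ 2

/-- `P γ s` : the polynomial `P_{2^s}`, with `P_1 = X - 1` and
`P_{2^{s+1}} = P_{2^s} · (P_{2^s} + r_s)`. -/
noncomputable def P (γ : ℕ → ℝ) : ℕ → Polynomial ℝ
  | 0 => X - 1
  | s + 1 => P γ s * (P γ s + C (r γ s))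

/-- The integral `∫ f dν_s` of a function `f` against the normalized counting measure `ν_s`
on the `2^s` (simple, real) zeros of `P_{2^s} + r_s/2`. -/
noncomputable def nuInt (γ : ℕ → ℝ) (s : ℕ) (f : ℝ → ℝ) : ℝ :=
  (((P γ s + C (r γ s / 2)).roots.map f).sum) / 2 ^ s

lemma aux_r_pos {γ : ℕ → ℝ} (hγ : ∀ s : ℕ, 0 < γ (s + 1)) : ∀ s, 0 < r γ s
  | 0 => one_pos
  | s + 1 => mul_pos (hγ s) (pow_pos (aux_r_pos hγ s) 2)

lemma aux_P_monic_deg {γ : ℕ → ℝ} : ∀ s, (P γ s).Monic ∧ (P γ s).natDegree = 2 ^ s := by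
  intro s
  induction s with
  | zero =>
    have h1 : (X - 1 : Polynomial ℝ) = X - C 1 := by rw [C_1]
    rw [show P γ 0 = X - 1 from rfl, h1]
    exact ⟨monic_X_sub_C 1, by rw [natDegree_X_sub_C, pow_zero]⟩
  | succ s ih =>
    obtain ⟨hm, hd⟩ := ih
    have hdegpos : 0 < (P γ s).natDegree := by rw [hd]; positivity
    have h2 : ∀ b : ℝ, (P γ s + C b).Monic := by
      intro b
      apply hm.add_of_left
      calc degree (C b) ≤ 0 := degree_C_le
        _ < degree (P γ s) := natDegree_pos_iff_degree_pos.mp hdegpos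
    constructor
    · exact hm.mul (h2 _)
    · rw [show P γ (s+1) = P γ s * (P γ s + C (r γ s)) from rfl,
        hm.natDegree_mul (h2 _), natDegree_add_C, hd, pow_succ]
      ring

lemma aux_PC_monic {γ : ℕ → ℝ} (s : ℕ) (b : ℝ) : (P γ s + C b).Monic := by
  obtain ⟨hm, hd⟩ := aux_P_monic_deg (γ := γ) s
  apply hm.add_of_left
  calc degree (C b) ≤ 0 := degree_C_le
    _ < degree (P γ s) := natDegree_pos_iff_degree_pos.mp (by rw [hd]; positivity)

lemma aux_PC_natDegree {γ : ℕ → ℝ} (s : ℕ) (b : ℝ) : (P γ s + C b).natDegree = 2 ^ s := by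
  rw [natDegree_add_C, (aux_P_monic_deg s).2]

/-- root sum of `q` over the roots of `h` -/
noncomputable def RS (h q : Polynomial ℝ) : ℝ := (h.roots.map (fun x => q.eval x)).sum

lemma aux_factor {γ : ℕ → ℝ} (hγ : ∀ s : ℕ, 0 < γ (s + 1) ∧ γ (s + 1) < 1 / 4)
    (s : ℕ) {b : ℝ} (hb0 : 0 ≤ b) (hb1 : b ≤ r γ (s + 1)) :
    ∃ b₁ b₂ : ℝ, 0 ≤ b₁ ∧ b₁ ≤ r γ s ∧ 0 ≤ b₂ ∧ b₂ ≤ r γ s ∧ b₁ + b₂ = r γ s ∧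
      P γ (s + 1) + C b = (P γ s + C b₁) * (P γ s + C b₂) := by
  have hρ : 0 < r γ s := aux_r_pos (fun t => (hγ t).1) s
  set ρ := r γ s with hρdef
  have hr1 : r γ (s+1) = γ (s+1) * ρ ^ 2 := rfl
  have hrad : 0 ≤ ρ ^ 2 / 4 - b := by nlinarith [(hγ s).2, (hγ s).1, sq_nonneg ρ]
  set t := Real.sqrt (ρ ^ 2 / 4 - b) with ht
  have ht0 : 0 ≤ t := Real.sqrt_nonneg _
  have ht2 : t ^ 2 = ρ ^ 2 / 4 - b := Real.sq_sqrt hrad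
  have htle : t ≤ ρ / 2 := by
    rw [ht]
    calc Real.sqrt (ρ ^ 2 / 4 - b) ≤ Real.sqrt ((ρ/2) ^ 2) := by
          apply Real.sqrt_le_sqrt; nlinarith
      _ = ρ / 2 := Real.sqrt_sq (by linarith)
  refine ⟨ρ/2 - t, ρ/2 + t, by linarith, by linarith, by linarith, by linarith, by ring, ?_⟩
  have h1 : C ρ = C (ρ/2 - t) + C (ρ/2 + t) := by rw [← C_add]; ring_nf
  have h2 : C (ρ/2 - t) * C (ρ/2 + t) = C b := by
    rw [← C_mul]; congr 1; nlinarith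
  calc P γ (s+1) + C b = P γ s * (P γ s + C ρ) + C b := rfl
    _ = (P γ s + C (ρ/2 - t)) * (P γ s + C (ρ/2 + t)) := by
        rw [h1, ← h2]; ring

lemma RS_expand {γ : ℕ → ℝ} (s : ℕ) (β : ℝ) (u v : Polynomial ℝ) :
    RS (P γ s + C β) (u * (P γ s + C (r γ s / 2)) + v)
      = (r γ s / 2 - β) * RS (P γ s + C β) u + RS (P γ s + C β) v := by
  unfold RS
  rw [← Multiset.sum_map_mul_left, ← Multiset.sum_map_add]
  congr 1
  apply Multiset.map_congr rfl
  intro x hx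
  have hroot : (P γ s + C β).eval x = 0 := by
    have := isRoot_of_mem_roots hx; exact this
  have hPx : (P γ s).eval x = -β := by
    simp only [eval_add, eval_C] at hroot; linarith
  simp only [eval_add, eval_mul, eval_C, hPx]
  ring

/-- decomposition of `w` by the monic polynomial `P γ s + C (r γ s / 2)`, with degree bounds -/
lemma aux_divmod {γ : ℕ → ℝ} (s : ℕ) (w : Polynomial ℝ) (hw : w.natDegree < 2 ^ (s+1)) :
    ∃ u v : Polynomial ℝ, u.natDegree < 2 ^ s ∧ v.natDegree < 2 ^ s ∧
      w = u * (P γ s + C (r γ s / 2)) + v := by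
  set Q := P γ s + C (r γ s / 2) with hQ
  have hQm : Q.Monic := aux_PC_monic s _
  have hQd : Q.natDegree = 2 ^ s := aux_PC_natDegree s _
  refine ⟨w /ₘ Q, w %ₘ Q, ?_, ?_, ?_⟩
  · rw [natDegree_divByMonic w hQm, hQd]
    have : (2:ℕ) ^ (s+1) = 2 ^ s + 2 ^ s := by rw [pow_succ]; ring
    omega
  · have h1 : Q ≠ 1 := fun h1 => by
      rw [h1, natDegree_one] at hQd
      exact absurd hQd.symm (Nat.pos_iff_ne_zero.mp (by positivity))
    have := natDegree_modByMonic_lt w hQm h1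
    omega
  · have := modByMonic_add_div w Q
    linear_combination -this

lemma aux_key {γ : ℕ → ℝ} (hγ : ∀ s : ℕ, 0 < γ (s + 1) ∧ γ (s + 1) < 1 / 4) :
    ∀ s : ℕ, ∀ b₁ b₂ : ℝ, 0 ≤ b₁ → b₁ ≤ r γ s → 0 ≤ b₂ → b₂ ≤ r γ s →
      ∀ w : Polynomial ℝ, w.natDegree < 2 ^ s →
        RS (P γ s + C b₁) w = RS (P γ s + C b₂) w := by
  intro s
  induction s with
  | zero =>
    intro b₁ b₂ _ _ _ _ w hw
    obtain ⟨c, rfl⟩ := natDegree_eq_zero.mp (by omega : w.natDegree = 0)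
    have hform : ∀ b : ℝ, P γ 0 + C b = X - C (1 - b) := by
      intro b
      rw [show P γ 0 = X - 1 from rfl, C_sub, C_1]; ring
    rw [RS, RS, hform, hform, roots_X_sub_C, roots_X_sub_C]
    simp
  | succ s ih =>
    intro b₁ b₂ hb₁0 hb₁1 hb₂0 hb₂1 w hw
    have hrpos : 0 < r γ s := aux_r_pos (fun t => (hγ t).1) s
    obtain ⟨u, v, hu, hv, rfl⟩ := aux_divmod (γ := γ) s w hw
    have key : ∀ b : ℝ, 0 ≤ b → b ≤ r γ (s+1) →
        RS (P γ (s+1) + C b) (u * (P γ s + C (r γ s / 2)) + v)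
          = 2 * RS (P γ s + C 0) v := by
      intro b hb0 hb1
      obtain ⟨a₁, a₂, ha₁0, ha₁1, ha₂0, ha₂1, hsum, hfac⟩ := aux_factor hγ s hb0 hb1
      have hne : (P γ s + C a₁) * (P γ s + C a₂) ≠ 0 :=
        ((aux_PC_monic s a₁).mul (aux_PC_monic s a₂)).ne_zero
      rw [RS, hfac, roots_mul hne, Multiset.map_add, Multiset.sum_add]
      rw [show ((P γ s + C a₁).roots.map (fun x => (u * (P γ s + C (r γ s / 2)) + v).eval x)).sum
          = RS (P γ s + C a₁) (u * (P γ s + C (r γ s / 2)) + v) from rfl]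
      rw [show ((P γ s + C a₂).roots.map (fun x => (u * (P γ s + C (r γ s / 2)) + v).eval x)).sum
          = RS (P γ s + C a₂) (u * (P γ s + C (r γ s / 2)) + v) from rfl]
      rw [RS_expand, RS_expand]
      rw [ih a₁ 0 ha₁0 ha₁1 le_rfl hrpos.le u hu,
          ih a₂ 0 ha₂0 ha₂1 le_rfl hrpos.le u hu,
          ih a₁ 0 ha₁0 ha₁1 le_rfl hrpos.le v hv,
          ih a₂ 0 ha₂0 ha₂1 le_rfl hrpos.le v hv]
      have : r γ s / 2 - a₁ + (r γ s / 2 - a₂) = 0 := by rw [← hsum] at *; ring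
      linear_combination RS (P γ s + C 0) u * this
    rw [key b₁ hb₁0 hb₁1, key b₂ hb₂0 hb₂1]

lemma aux_half {γ : ℕ → ℝ} (hγ : ∀ s : ℕ, 0 < γ (s + 1) ∧ γ (s + 1) < 1 / 4)
    (t : ℕ) (q : Polynomial ℝ) (hq : q.natDegree < 2 ^ (t+1)) :
    RS (P γ (t+1) + C (r γ (t+1) / 2)) q = 2 * RS (P γ t + C (r γ t / 2)) q := by
  have hrpos : 0 < r γ t := aux_r_pos (fun u => (hγ u).1) t
  have hrpos1 : 0 < r γ (t+1) := aux_r_pos (fun u => (hγ u).1) (t+1)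
  obtain ⟨u, v, hu, hv, rfl⟩ := aux_divmod (γ := γ) t q hq
  obtain ⟨a₁, a₂, ha₁0, ha₁1, ha₂0, ha₂1, hsum, hfac⟩ :=
    aux_factor hγ t (b := r γ (t+1) / 2) (by linarith) (by linarith)
  have hne : (P γ t + C a₁) * (P γ t + C a₂) ≠ 0 :=
    ((aux_PC_monic t a₁).mul (aux_PC_monic t a₂)).ne_zero
  have lhs_eq : RS (P γ (t+1) + C (r γ (t+1) / 2)) (u * (P γ t + C (r γ t / 2)) + v)
      = RS (P γ t + C a₁) (u * (P γ t + C (r γ t / 2)) + v)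
        + RS (P γ t + C a₂) (u * (P γ t + C (r γ t / 2)) + v) := by
    rw [RS, hfac, roots_mul hne, Multiset.map_add, Multiset.sum_add]; rfl
  rw [lhs_eq, RS_expand, RS_expand, RS_expand]
  have hhalf0 : 0 ≤ r γ t / 2 := by linarith
  have hhalf1 : r γ t / 2 ≤ r γ t := by linarith
  rw [aux_key hγ t a₁ (r γ t / 2) ha₁0 ha₁1 hhalf0 hhalf1 u hu,
      aux_key hγ t a₂ (r γ t / 2) ha₂0 ha₂1 hhalf0 hhalf1 u hu,
      aux_key hγ t a₁ (r γ t / 2) ha₁0 ha₁1 hhalf0 hhalf1 v hv,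
      aux_key hγ t a₂ (r γ t / 2) ha₂0 ha₂1 hhalf0 hhalf1 v hv]
  have : r γ t / 2 - a₁ + (r γ t / 2 - a₂) = 0 := by rw [← hsum] at *; ring
  linear_combination RS (P γ t + C (r γ t / 2)) u * this

lemma aux_nuInt_eq (γ : ℕ → ℝ) (t : ℕ) (q : Polynomial ℝ) :
    nuInt γ t (fun x => q.eval x) = RS (P γ t + C (r γ t / 2)) q / 2 ^ t := rfl

/-- Lemma O : the explicit polynomial `P_{2^s} + r_s/2` is orthogonal to lower degrees. -/
lemma aux_orth {γ : ℕ → ℝ} (hγ : ∀ s : ℕ, 0 < γ (s + 1) ∧ γ (s + 1) < 1 / 4)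
    (μ : Measure ℝ)
    (hμconv : ∀ p : Polynomial ℝ,
      Tendsto (fun s => nuInt γ s (fun x => p.eval x)) atTop (nhds (∫ x, p.eval x ∂μ)))
    (s : ℕ) (p : Polynomial ℝ) (hp : p.natDegree < 2 ^ s) :
    ∫ x, ((P γ s + C (r γ s / 2)) * p).eval x ∂μ = 0 := by
  set q := (P γ s + C (r γ s / 2)) * p with hq
  have hqdeg : q.natDegree < 2 ^ (s+1) := by
    have h1 := natDegree_mul_le (p := P γ s + C (r γ s / 2)) (q := p)
    have h2 := aux_PC_natDegree (γ := γ) s (r γ s / 2)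
    have h3 : (2:ℕ) ^ (s+1) = 2 ^ s + 2 ^ s := by rw [pow_succ]; ring
    have h4 : q.natDegree = ((P γ s + C (r γ s / 2)) * p).natDegree := rfl
    omega
  have hzero : ∀ t, s ≤ t → RS (P γ t + C (r γ t / 2)) q = 0 := by
    intro t ht
    induction t, ht using Nat.le_induction with
    | base =>
      rw [RS]
      apply Multiset.sum_eq_zero
      intro y hy
      obtain ⟨x, hx, rfl⟩ := Multiset.mem_map.mp hy
      have hroot : (P γ s + C (r γ s / 2)).eval x = 0 := isRoot_of_mem_roots hx
      rw [hq, eval_mul, hroot, zero_mul]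
    | succ t ht ih =>
      have hqd : q.natDegree < 2 ^ (t+1) := by
        calc q.natDegree < 2 ^ (s+1) := hqdeg
          _ ≤ 2 ^ (t+1) := Nat.pow_le_pow_right (by norm_num) (by omega)
      rw [aux_half hγ t q hqd, ih, mul_zero]
  have h1 : Tendsto (fun t => nuInt γ t (fun x => q.eval x)) atTop (nhds 0) := by
    apply Tendsto.congr' _ tendsto_const_nhds
    filter_upwards [eventually_ge_atTop s] with t ht
    rw [aux_nuInt_eq, hzero t ht, zero_div]
  exact tendsto_nhds_unique (hμconv q) h1

/-- the abstract orthogonal polynomial at index `2^s` is the explicit one -/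
lemma aux_Q_eq {γ : ℕ → ℝ} (hγ : ∀ s : ℕ, 0 < γ (s + 1) ∧ γ (s + 1) < 1 / 4)
    (μ : Measure ℝ)
    (hμint : ∀ p : Polynomial ℝ, Integrable (fun x => p.eval x) μ)
    (hμpos : ∀ p : Polynomial ℝ, p ≠ 0 → 0 < ∫ x, (p.eval x) ^ 2 ∂μ)
    (hμconv : ∀ p : Polynomial ℝ,
      Tendsto (fun s => nuInt γ s (fun x => p.eval x)) atTop (nhds (∫ x, p.eval x ∂μ)))
    (Q : ℕ → Polynomial ℝ) (hQmonic : ∀ n, (Q n).Monic) (hQdeg : ∀ n, (Q n).natDegree = n)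
    (hQorth : ∀ n : ℕ, ∀ p : Polynomial ℝ, p.degree < (n : WithBot ℕ) →
      ∫ x, (Q n).eval x * p.eval x ∂μ = 0)
    (s : ℕ) : Q (2 ^ s) = P γ s + C (r γ s / 2) := by
  set Qs : Polynomial ℝ := P γ s + C (r γ s / 2) with hQs
  set D : Polynomial ℝ := Qs - Q (2 ^ s) with hD
  by_cases hD0 : D = 0
  · have := sub_eq_zero.mp hD0; exact this.symm
  exfalso
  have hdegQs : Qs.degree = ((2:ℕ) ^ s : ℕ) := by
    rw [degree_eq_natDegree (aux_PC_monic s _).ne_zero, aux_PC_natDegree]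
  have hdegQ : (Q (2 ^ s)).degree = ((2:ℕ) ^ s : ℕ) := by
    rw [degree_eq_natDegree (hQmonic _).ne_zero, hQdeg]
  have hDdeg : D.degree < ((2:ℕ) ^ s : ℕ) := by
    rw [hD]
    calc (Qs - Q (2^s)).degree < Qs.degree :=
          degree_sub_lt (by rw [hdegQs, hdegQ]) (aux_PC_monic s _).ne_zero
            (by rw [(aux_PC_monic s _).leadingCoeff, (hQmonic _).leadingCoeff])
      _ = _ := hdegQs
  have hDnat : D.natDegree < 2 ^ s := (natDegree_lt_iff_degree_lt hD0).mpr hDdeg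
  have hI1 : ∫ x, (Qs * D).eval x ∂μ = 0 := aux_orth hγ μ hμconv s D hDnat
  have hI2 : ∫ x, (Q (2 ^ s) * D).eval x ∂μ = 0 := by
    have := hQorth (2 ^ s) D (by exact_mod_cast hDdeg)
    simpa [eval_mul] using this
  have hsplit : ∫ x, (D.eval x) ^ 2 ∂μ = 0 := by
    have hfun : ∀ x : ℝ, (D.eval x) ^ 2 = (Qs * D).eval x - (Q (2^s) * D).eval x := by
      intro x; simp only [hD, eval_mul, eval_sub]; ring
    calc ∫ x, (D.eval x) ^ 2 ∂μ = ∫ x, ((Qs * D).eval x - (Q (2^s) * D).eval x) ∂μ := by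
          simp only [hfun]
      _ = (∫ x, (Qs * D).eval x ∂μ) - ∫ x, (Q (2^s) * D).eval x ∂μ :=
          integral_sub (hμint _) (hμint _)
      _ = 0 := by rw [hI1, hI2, sub_zero]
  exact absurd hsplit (hμpos D hD0).ne'

lemma aux_rec {γ : ℕ → ℝ} (s : ℕ) :
    P γ (s+1) + C (r γ (s+1) / 2)
      = (P γ s + C (r γ s / 2)) ^ 2 + C (r γ (s+1) / 2 - (r γ s) ^ 2 / 4) := by
  have h1 : C (r γ s) = 2 * C (r γ s / 2) := by
    rw [two_mul, ← C_add, add_halves]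
  have h2 : (C (r γ s / 2) : Polynomial ℝ) ^ 2 = C ((r γ s) ^ 2 / 4) := by
    rw [← C_pow]; congr 1; ring
  rw [C_sub, show P γ (s+1) = P γ s * (P γ s + C (r γ s)) from rfl]
  linear_combination (P γ s) * h1 - h2

noncomputable def EE (Q : ℕ → Polynomial ℝ) (cc : ℕ → ℝ) (s₀ : ℕ) : ℕ → Polynomial ℝ
  | 0 => 0
  | i + 1 => (EE Q cc s₀ i - C (cc (s₀ + i))) * Q (2 ^ (s₀ + i + 1))

lemma EE_spec (Q : ℕ → Polynomial ℝ) (cc : ℕ → ℝ) (s₀ : ℕ)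
    (hrec : ∀ s, Q (2 ^ (s + 1)) = (Q (2 ^ s)) ^ 2 + C (cc s)) :
    ∀ i, (Q (2 ^ s₀)) ^ 2 * (∏ d ∈ Finset.Icc 1 i, Q (2 ^ (s₀ + d)))
      = (Q (2 ^ (s₀ + i))) ^ 2 + EE Q cc s₀ i := by
  intro i
  induction i with
  | zero => simp [EE]
  | succ i ih =>
    rw [Finset.prod_Icc_succ_top (by omega : 1 ≤ i + 1), ← mul_assoc, ih]
    rw [show s₀ + (i + 1) = s₀ + i + 1 from rfl]
    rw [show EE Q cc s₀ (i + 1) = (EE Q cc s₀ i - C (cc (s₀ + i))) * Q (2 ^ (s₀ + i + 1)) from rfl]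
    rw [hrec (s₀ + i)]; ring

lemma EE_deg (Q : ℕ → Polynomial ℝ) (cc : ℕ → ℝ) (s₀ : ℕ)
    (hQdeg : ∀ n, (Q n).natDegree = n) :
    ∀ i, (EE Q cc s₀ i).natDegree ≤ 2 ^ (s₀ + i + 1) - 2 ^ (s₀ + 1) := by
  intro i
  induction i with
  | zero => simp [EE]
  | succ i ih =>
    rw [show s₀ + (i + 1) = s₀ + i + 1 from rfl]
    rw [show EE Q cc s₀ (i + 1) = (EE Q cc s₀ i - C (cc (s₀ + i))) * Q (2 ^ (s₀ + i + 1)) from rfl]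
    have h0 := natDegree_mul_le (p := EE Q cc s₀ i - C (cc (s₀ + i))) (q := Q (2 ^ (s₀ + i + 1)))
    have h1 := natDegree_sub_le (EE Q cc s₀ i) (C (cc (s₀ + i)))
    have h2 : (C (cc (s₀ + i))).natDegree = 0 := natDegree_C _
    have h3 := hQdeg (2 ^ (s₀ + i + 1))
    have h4 : (2:ℕ) ^ (s₀ + i + 1 + 1) = 2 ^ (s₀ + i + 1) + 2 ^ (s₀ + i + 1) := by
      rw [pow_succ]; ring
    have h5 : (2:ℕ) ^ (s₀ + 1) ≤ 2 ^ (s₀ + i + 1) := Nat.pow_le_pow_right (by norm_num) (by omega)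
    omega

theorem stmt_8 (γ : ℕ → ℝ) (hγ : ∀ s : ℕ, 0 < γ (s + 1) ∧ γ (s + 1) < 1 / 4)
    (μ : Measure ℝ) [IsProbabilityMeasure μ]
    (hμint : ∀ p : Polynomial ℝ, Integrable (fun x => p.eval x) μ)
    (hμpos : ∀ p : Polynomial ℝ, p ≠ 0 → 0 < ∫ x, (p.eval x) ^ 2 ∂μ)
    (hμconv : ∀ p : Polynomial ℝ,
      Tendsto (fun s => nuInt γ s (fun x => p.eval x)) atTop (nhds (∫ x, p.eval x ∂μ)))
    (Q : ℕ → Polynomial ℝ) (hQmonic : ∀ n, (Q n).Monic) (hQdeg : ∀ n, (Q n).natDegree = n)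
    (hQorth : ∀ n : ℕ, ∀ p : Polynomial ℝ, p.degree < (n : WithBot ℕ) →
      ∫ x, (Q n).eval x * p.eval x ∂μ = 0)
    (n : ℕ) (hn : 1 ≤ n) (sf idx : ℕ → ℕ)
    (hs1 : 0 < sf 1) (hsmono : ∀ k, 1 ≤ k → k < n → sf k < sf (k + 1))
    (hidx : ∀ k, 1 ≤ k → k ≤ n → idx k = 1 ∨ idx k = 2)
    (hn2 : 2 ≤ n) (k : ℕ) (hk : k ≤ n - 2)
    (hones : ∀ t, t ≤ k → idx (n - t) = 1) (htwo : idx (n - k - 1) = 2)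
    (hconsec : ∀ t, t ≤ k + 1 → sf (n - t) + t = sf n) :
    ∫ x, ∏ j ∈ Finset.Icc 1 n, ((Q (2 ^ sf j)).eval x) ^ idx j ∂μ =
      (∫ x, ((Q (2 ^ sf n)).eval x) ^ 2 ∂μ) *
        ∫ x, ∏ j ∈ Finset.Icc 1 (n - k - 2), ((Q (2 ^ sf j)).eval x) ^ idx j ∂μ := by
  classical
  have hQeq : ∀ s, Q (2 ^ s) = P γ s + C (r γ s / 2) :=
    aux_Q_eq hγ μ hμint hμpos hμconv Q hQmonic hQdeg hQorth
  set cc : ℕ → ℝ := fun s => r γ (s + 1) / 2 - (r γ s) ^ 2 / 4 with hccdef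
  have hrecQ : ∀ s, Q (2 ^ (s + 1)) = (Q (2 ^ s)) ^ 2 + C (cc s) := by
    intro s
    have h := aux_rec (γ := γ) s
    rw [hQeq, hQeq]
    simpa [hccdef] using h
  have horthI : ∀ (N : ℕ) (B : Polynomial ℝ), B.natDegree < N →
      ∫ x, (Q N * B).eval x ∂μ = 0 := by
    intro N B hB
    have hdeg : B.degree < (N : WithBot ℕ) :=
      lt_of_le_of_lt degree_le_natDegree (by exact_mod_cast hB)
    simpa [eval_mul] using hQorth N B hdeg
  have hone : ∫ x, (1 : Polynomial ℝ).eval x ∂μ = 1 := by simp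
  have hsq : ∀ (s : ℕ) (B : Polynomial ℝ), B.natDegree < 2 ^ (s + 1) →
      ∫ x, ((Q (2 ^ s)) ^ 2 * B).eval x ∂μ = (- cc s) * ∫ x, B.eval x ∂μ := by
    intro s B hB
    have hpt : ∀ x : ℝ, ((Q (2 ^ s)) ^ 2 * B).eval x
        = (Q (2 ^ (s + 1)) * B).eval x - (C (cc s) * B).eval x := by
      intro x
      rw [hrecQ s]
      simp only [eval_mul, eval_add, eval_pow, eval_sub, eval_C]
      ring
    calc ∫ x, ((Q (2 ^ s)) ^ 2 * B).eval x ∂μ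
        = ∫ x, ((Q (2 ^ (s + 1)) * B).eval x - (C (cc s) * B).eval x) ∂μ := by
          simp only [hpt]
      _ = (∫ x, (Q (2 ^ (s + 1)) * B).eval x ∂μ) - ∫ x, (C (cc s) * B).eval x ∂μ :=
          integral_sub (hμint _) (hμint _)
      _ = - ∫ x, (C (cc s) * B).eval x ∂μ := by rw [horthI _ B hB, zero_sub]
      _ = (- cc s) * ∫ x, B.eval x ∂μ := by
          simp only [eval_mul, eval_C]
          rw [integral_const_mul]
          ring
  -- sum bound for exponents
  have hsum : ∀ t, 1 ≤ t → t ≤ n → (∑ j ∈ Finset.Icc 1 t, 2 ^ sf j) < 2 ^ (sf t + 1) := by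
    intro t ht
    induction t, ht using Nat.le_induction with
    | base =>
      intro _
      rw [Finset.Icc_self, Finset.sum_singleton]
      have h1 : (2:ℕ) ^ (sf 1 + 1) = 2 ^ sf 1 + 2 ^ sf 1 := by rw [pow_succ]; ring
      have h2 : 0 < (2:ℕ) ^ sf 1 := by positivity
      omega
    | succ t ht ih =>
      intro htn
      rw [Finset.sum_Icc_succ_top (by omega : 1 ≤ t + 1)]
      have h1 : sf t + 1 ≤ sf (t + 1) := hsmono t ht (by omega)
      have h2 := ih (by omega)
      have h3 : (2:ℕ) ^ (sf t + 1) ≤ 2 ^ sf (t + 1) := Nat.pow_le_pow_right (by norm_num) h1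
      have h4 : (2:ℕ) ^ (sf (t + 1) + 1) = 2 ^ sf (t + 1) + 2 ^ sf (t + 1) := by
        rw [pow_succ]; ring
      omega
  -- convert the goal to polynomial-level integrands
  simp only [← eval_pow, ← eval_prod]
  -- position bookkeeping
  set m' := n - k - 2 with hm'def
  have hmeq : n - k - 1 = m' + 1 := by omega
  set s₀ := sf (n - k - 1) with hs₀def
  have hs₀n : s₀ + (k + 1) = sf n := by
    have h := hconsec (k + 1) le_rfl
    have e : n - (k + 1) = n - k - 1 := by omega
    rw [e] at h
    omega
  have hsfm : sf (m' + 1) = s₀ := by rw [hs₀def, hmeq]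
  set Bpoly := ∏ j ∈ Finset.Icc 1 m', (Q (2 ^ sf j)) ^ idx j with hBdef
  have hBdeg : Bpoly.natDegree + 2 ≤ 2 ^ (s₀ + 1) := by
    rcases Nat.eq_zero_or_pos m' with h0 | hpos
    · have hB1 : Bpoly = 1 := by
        rw [hBdef, h0, Finset.Icc_eq_empty (by omega), Finset.prod_empty]
      rw [hB1, natDegree_one]
      have : (2:ℕ) ^ 1 ≤ 2 ^ (s₀ + 1) := Nat.pow_le_pow_right (by norm_num) (by omega)
      omega
    · have hd1 : Bpoly.natDegree ≤ ∑ j ∈ Finset.Icc 1 m', idx j * 2 ^ sf j := by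
        rw [hBdef]
        refine le_trans (natDegree_prod_le _ _) (Finset.sum_le_sum ?_)
        intro j hj
        exact le_trans natDegree_pow_le (by rw [hQdeg])
      have hd2 : ∑ j ∈ Finset.Icc 1 m', idx j * 2 ^ sf j
          ≤ ∑ j ∈ Finset.Icc 1 m', 2 * 2 ^ sf j := by
        refine Finset.sum_le_sum ?_
        intro j hj
        obtain ⟨hj1, hj2⟩ := Finset.mem_Icc.mp hj
        have := hidx j (by omega) (by omega)
        exact Nat.mul_le_mul_right _ (by omega)
      have hd3 : ∑ j ∈ Finset.Icc 1 m', 2 * 2 ^ sf j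
          = 2 * ∑ j ∈ Finset.Icc 1 m', 2 ^ sf j := by rw [Finset.mul_sum]
      have hd4 := hsum m' hpos (by omega)
      have hd5 : sf m' + 1 ≤ s₀ := by
        have h := hsmono m' hpos (by omega)
        omega
      have hd6 : (2:ℕ) ^ (sf m' + 1) ≤ 2 ^ s₀ := Nat.pow_le_pow_right (by norm_num) hd5
      have hd7 : (2:ℕ) ^ (s₀ + 1) = 2 ^ s₀ + 2 ^ s₀ := by rw [pow_succ]; ring
      omega
  -- split the big product
  have hsplit : (∏ j ∈ Finset.Icc 1 n, (Q (2 ^ sf j)) ^ idx j)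
      = Bpoly * ((Q (2 ^ s₀)) ^ 2 * ∏ d ∈ Finset.Icc 1 (k + 1), Q (2 ^ (s₀ + d))) := by
    have hIoc : ∀ t : ℕ, Finset.Icc 1 t = Finset.Ioc 0 t := fun t => Finset.Icc_add_one_left_eq_Ioc (0:ℕ) t
    have hc := Finset.prod_Ioc_consecutive (fun j => (Q (2 ^ sf j)) ^ idx j)
      (by omega : 0 ≤ m' + 1) (by omega : m' + 1 ≤ n)
    have htop := Finset.prod_Ioc_succ_top (by omega : 0 ≤ m')
      (fun j => (Q (2 ^ sf j)) ^ idx j)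
    have hidxm : idx (m' + 1) = 2 := by rw [← hmeq]; exact htwo
    have hmap : Finset.Ioc (m' + 1) n = (Finset.Ioc 0 (k + 1)).map (addLeftEmbedding (m' + 1)) := by
      rw [Finset.map_add_left_Ioc]
      congr 1 <;> omega
    have htail : (∏ j ∈ Finset.Ioc (m' + 1) n, (Q (2 ^ sf j)) ^ idx j)
        = ∏ d ∈ Finset.Ioc 0 (k + 1), (Q (2 ^ sf (m' + 1 + d))) ^ idx (m' + 1 + d) := by
      rw [hmap, Finset.prod_map]
      rfl
    have hterm : ∀ d ∈ Finset.Ioc 0 (k + 1),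
        (Q (2 ^ sf (m' + 1 + d))) ^ idx (m' + 1 + d) = Q (2 ^ (s₀ + d)) := by
      intro d hd
      obtain ⟨hd0, hd1⟩ := Finset.mem_Ioc.mp hd
      have he : n - (k + 1 - d) = m' + 1 + d := by omega
      have hidx1 : idx (m' + 1 + d) = 1 := by rw [← he]; exact hones (k + 1 - d) (by omega)
      have hsfd : sf (m' + 1 + d) = s₀ + d := by
        have h := hconsec (k + 1 - d) (by omega)
        rw [he] at h
        omega
      rw [hidx1, hsfd, pow_one]
    calc (∏ j ∈ Finset.Icc 1 n, (Q (2 ^ sf j)) ^ idx j)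
        = ∏ j ∈ Finset.Ioc 0 n, (Q (2 ^ sf j)) ^ idx j := by rw [hIoc]
      _ = (∏ j ∈ Finset.Ioc 0 (m' + 1), (Q (2 ^ sf j)) ^ idx j)
            * ∏ j ∈ Finset.Ioc (m' + 1) n, (Q (2 ^ sf j)) ^ idx j := hc.symm
      _ = ((∏ j ∈ Finset.Ioc 0 m', (Q (2 ^ sf j)) ^ idx j) * (Q (2 ^ s₀)) ^ 2)
            * ∏ d ∈ Finset.Icc 1 (k + 1), Q (2 ^ (s₀ + d)) := by
          rw [htop, hsfm, hidxm, htail, hIoc (k + 1), Finset.prod_congr rfl hterm]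
      _ = Bpoly * ((Q (2 ^ s₀)) ^ 2 * ∏ d ∈ Finset.Icc 1 (k + 1), Q (2 ^ (s₀ + d))) := by
          rw [hBdef, hIoc m']
          ring
  rw [hsplit]
  -- telescoping
  have htel := EE_spec Q cc s₀ hrecQ (k + 1)
  rw [show s₀ + (k + 1) = sf n from hs₀n] at htel
  rw [htel]
  -- orthogonality of the error term
  have hEB : ∫ x, (EE Q cc s₀ (k + 1) * Bpoly).eval x ∂μ = 0 := by
    rw [show EE Q cc s₀ (k + 1)
        = (EE Q cc s₀ k - C (cc (s₀ + k))) * Q (2 ^ (s₀ + k + 1)) from rfl]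
    rw [show (EE Q cc s₀ k - C (cc (s₀ + k))) * Q (2 ^ (s₀ + k + 1)) * Bpoly
        = Q (2 ^ (s₀ + k + 1)) * ((EE Q cc s₀ k - C (cc (s₀ + k))) * Bpoly) from by ring]
    apply horthI
    have d1 := natDegree_mul_le (p := EE Q cc s₀ k - C (cc (s₀ + k))) (q := Bpoly)
    have d2 := natDegree_sub_le (EE Q cc s₀ k) (C (cc (s₀ + k)))
    have d3 : (C (cc (s₀ + k))).natDegree = 0 := natDegree_C _
    have d4 := EE_deg Q cc s₀ hQdeg k
    have d5 : (2:ℕ) ^ (s₀ + 1) ≤ 2 ^ (s₀ + k + 1) := Nat.pow_le_pow_right (by norm_num) (by omega)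
    omega
  have hQB : ∫ x, ((Q (2 ^ sf n)) ^ 2 * Bpoly).eval x ∂μ
      = (- cc (sf n)) * ∫ x, Bpoly.eval x ∂μ := by
    apply hsq
    have h5 : (2:ℕ) ^ (s₀ + 1) ≤ 2 ^ (sf n + 1) := Nat.pow_le_pow_right (by norm_num) (by omega)
    omega
  have hQsq : ∫ x, ((Q (2 ^ sf n)) ^ 2).eval x ∂μ = - cc (sf n) := by
    rw [show ((Q (2 ^ sf n)) ^ 2 : Polynomial ℝ) = (Q (2 ^ sf n)) ^ 2 * 1 from by ring]
    rw [hsq (sf n) 1 (by simpa using Nat.one_le_two_pow), hone, mul_one]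
  have hpt2 : ∀ x : ℝ, (Bpoly * ((Q (2 ^ sf n)) ^ 2 + EE Q cc s₀ (k + 1))).eval x
      = ((Q (2 ^ sf n)) ^ 2 * Bpoly).eval x + (EE Q cc s₀ (k + 1) * Bpoly).eval x := by
    intro x
    simp only [eval_mul, eval_add, eval_pow]
    ring
  calc ∫ x, (Bpoly * ((Q (2 ^ sf n)) ^ 2 + EE Q cc s₀ (k + 1))).eval x ∂μ
      = ∫ x, (((Q (2 ^ sf n)) ^ 2 * Bpoly).eval x + (EE Q cc s₀ (k + 1) * Bpoly).eval x) ∂μ := by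
        simp only [hpt2]
    _ = (∫ x, ((Q (2 ^ sf n)) ^ 2 * Bpoly).eval x ∂μ)
          + ∫ x, (EE Q cc s₀ (k + 1) * Bpoly).eval x ∂μ := integral_add (hμint _) (hμint _)
    _ = (- cc (sf n)) * ∫ x, Bpoly.eval x ∂μ := by rw [hQB, hEB, add_zero]
    _ = (∫ x, ((Q (2 ^ sf n)) ^ 2).eval x ∂μ) * ∫ x, Bpoly.eval x ∂μ := by rw [hQsq]
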